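/- Let 0 < d < D be integers, let L₁ be a d-flat in ℝ^D, let x ∈ L₁, let 0 < w ≤ r, and let Ω ⊆ ℝ^D be a set such that Ω ∩ B(x,r) = T(L₁,w) ∩ B(x,r). Then the infimum over all d-flats L of ℝ^D of sup_{y ∈ Ω ∩ B(x,r)} dist(y,L) equals w. Consequently the quantity β_∞(x,r) := (1/r) · inf_L sup_{y ∈ Ω ∩ B(x,r)} dist(y,L) equals w/r, which is a decreasing function of r on the range where the hypothesis holds. -/

import Mathlib

open MeasureTheory Metric

/-- The tube of width `w` around a set `L`. -/
def tube {E : Type*} [PseudoMetricSpace E] (L : Set E) (w : ℝ) : Set E :=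
  {y | infDist y L ≤ w}

/-- If, inside the ball `B(x,r)` with `x ∈ L₁` and `0 < w ≤ r`, the set `Ω` coincides with the
tube `T(L₁,w)`, then the infimum over all `d`-flats `L` of `sup_{y ∈ Ω ∩ B(x,r)} dist(y,L)`
equals `w`; consequently `β_∞(x,r) = (1/r)·inf_L sup_{y ∈ Ω ∩ B(x,r)} dist(y,L) = w/r`. -/
theorem infFlat_sSup_dist_tube_eq (d D : ℕ) (hd : 0 < d) (hdD : d < D)
    (L₁ : AffineSubspace ℝ (EuclideanSpace ℝ (Fin D)))
    (hL₁d : Module.finrank ℝ L₁.direction = d)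
    (x : EuclideanSpace ℝ (Fin D)) (hx : x ∈ L₁)
    (w r : ℝ) (hw : 0 < w) (hwr : w ≤ r)
    (Ω : Set (EuclideanSpace ℝ (Fin D)))
    (hΩ : Ω ∩ closedBall x r =
      tube (L₁ : Set (EuclideanSpace ℝ (Fin D))) w ∩ closedBall x r) :
    sInf { s : ℝ | ∃ L : AffineSubspace ℝ (EuclideanSpace ℝ (Fin D)),
        Module.finrank ℝ L.direction = d ∧
        (L : Set (EuclideanSpace ℝ (Fin D))).Nonempty ∧
        s = sSup ((fun y => infDist y (L : Set (EuclideanSpace ℝ (Fin D)))) ''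
          (Ω ∩ closedBall x r)) } = w ∧
    (1 / r) * sInf { s : ℝ | ∃ L : AffineSubspace ℝ (EuclideanSpace ℝ (Fin D)),
        Module.finrank ℝ L.direction = d ∧
        (L : Set (EuclideanSpace ℝ (Fin D))).Nonempty ∧
        s = sSup ((fun y => infDist y (L : Set (EuclideanSpace ℝ (Fin D)))) ''
          (Ω ∩ closedBall x r)) } = w / r := by
  set S := { s : ℝ | ∃ L : AffineSubspace ℝ (EuclideanSpace ℝ (Fin D)),
        Module.finrank ℝ L.direction = d ∧
        (L : Set (EuclideanSpace ℝ (Fin D))).Nonempty ∧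
        s = sSup ((fun y => infDist y (L : Set (EuclideanSpace ℝ (Fin D)))) ''
          (Ω ∩ closedBall x r)) } with hS
  -- x itself is in Ω ∩ closedBall x r
  have hxΩ : x ∈ Ω ∩ closedBall x r := by
    rw [hΩ]
    refine ⟨?_, ?_⟩
    · show infDist x (L₁ : Set (EuclideanSpace ℝ (Fin D))) ≤ w
      rw [infDist_zero_of_mem hx]; exact le_of_lt hw
    · exact mem_closedBall_self (le_trans (le_of_lt hw) hwr)
  -- any y ∈ Ω ∩ ball satisfies infDist y L₁ ≤ w
  have hmemtube : ∀ y ∈ Ω ∩ closedBall x r,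
      infDist y (L₁ : Set (EuclideanSpace ℝ (Fin D))) ≤ w := by
    intro y hy
    rw [hΩ] at hy
    exact hy.1
  -- the witness element given by L₁
  have hs₁ : sSup ((fun y => infDist y (L₁ : Set (EuclideanSpace ℝ (Fin D)))) ''
      (Ω ∩ closedBall x r)) ∈ S :=
    ⟨L₁, hL₁d, ⟨x, hx⟩, rfl⟩
  have hs₁le : sSup ((fun y => infDist y (L₁ : Set (EuclideanSpace ℝ (Fin D)))) ''
      (Ω ∩ closedBall x r)) ≤ w := by
    apply csSup_le ⟨_, Set.mem_image_of_mem _ hxΩ⟩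
    rintro a ⟨y, hy, rfl⟩
    exact hmemtube y hy
  -- lower bound: every element of S is ≥ w
  have hlow : ∀ s ∈ S, w ≤ s := by
    rintro s ⟨L, hLd, ⟨p, hp⟩, rfl⟩
    -- find a unit vector orthogonal to L.direction
    have hdir_ne_top : L.direction ≠ ⊤ := by
      intro h
      have h2 : Module.finrank ℝ L.direction =
          Module.finrank ℝ (EuclideanSpace ℝ (Fin D)) := by
        rw [h]; exact finrank_top ℝ _
      rw [hLd, finrank_euclideanSpace_fin] at h2
      omega
    have horth : L.directionᗮ ≠ ⊥ := by
      intro h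
      exact hdir_ne_top (Submodule.orthogonal_eq_bot_iff.mp h)
    obtain ⟨v, hv, hv0⟩ := Submodule.exists_mem_ne_zero_of_ne_bot horth
    set u : EuclideanSpace ℝ (Fin D) := ‖v‖⁻¹ • v with hu
    have hnu : ‖u‖ = 1 := by
      rw [hu, norm_smul, norm_inv, norm_norm, inv_mul_cancel₀ (norm_ne_zero_iff.mpr hv0)]
    have hu_mem : u ∈ L.directionᗮ := Submodule.smul_mem _ _ hv
    set c : ℝ := inner ℝ (x - p) u with hc
    set ε : ℝ := if 0 ≤ c then 1 else -1 with hε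
    set y : EuclideanSpace ℝ (Fin D) := x + (ε * w) • u with hy
    have hεabs : |ε| = 1 := by
      rw [hε]; split <;> simp
    have hdyx : dist y x = w := by
      rw [hy, dist_eq_norm]
      simp only [add_sub_cancel_left, norm_smul, hnu, mul_one, Real.norm_eq_abs, abs_mul,
        hεabs, one_mul, abs_of_pos hw]
    have hyΩ : y ∈ Ω ∩ closedBall x r := by
      rw [hΩ]
      constructor
      · show infDist y (L₁ : Set (EuclideanSpace ℝ (Fin D))) ≤ w
        calc infDist y (L₁ : Set (EuclideanSpace ℝ (Fin D))) ≤ dist y x :=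
              infDist_le_dist_of_mem hx
          _ = w := hdyx
      · rw [mem_closedBall, hdyx]; exact hwr
    -- key distance bound: for any q ∈ L, w ≤ dist y q
    have hkey : ∀ q ∈ (L : Set (EuclideanSpace ℝ (Fin D))), w ≤ dist y q := by
      intro q hq
      have hqp : q -ᵥ p ∈ L.direction := AffineSubspace.vsub_mem_direction hq hp
      have hinner : (inner ℝ (y - q) u : ℝ) = c + ε * w := by
        have h1 : y - q = (x - p) + (ε * w) • u - (q - p) := by
          rw [hy]; abel
        rw [h1]
        have h2 : (inner ℝ (q - p) u : ℝ) = 0 := hu_mem (q - p) hqp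
        rw [sub_eq_add_neg, inner_add_left, inner_add_left, inner_neg_left, h2,
          real_inner_smul_left, real_inner_self_eq_norm_sq, hnu]
        rw [← hc]
        ring
      have hCS : |(inner ℝ (y - q) u : ℝ)| ≤ ‖y - q‖ := by
        calc |(inner ℝ (y - q) u : ℝ)| ≤ ‖y - q‖ * ‖u‖ := abs_real_inner_le_norm _ _
          _ = ‖y - q‖ := by rw [hnu, mul_one]
      have habs : w ≤ |c + ε * w| := by
        rw [hε]
        split_ifs with h
        · rw [one_mul, abs_of_nonneg (by linarith)]; linarith
        · push_neg at h
          rw [neg_one_mul, abs_of_nonpos (by linarith)]; linarith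
      calc w ≤ |(inner ℝ (y - q) u : ℝ)| := by rw [hinner]; exact habs
        _ ≤ ‖y - q‖ := hCS
        _ = dist y q := (dist_eq_norm _ _).symm
    have hbound : w ≤ infDist y (L : Set (EuclideanSpace ℝ (Fin D))) := by
      by_contra h
      push_neg at h
      obtain ⟨q, hq, hlt⟩ := (infDist_lt_iff ⟨p, hp⟩).mp h
      exact absurd hlt (not_lt.mpr (hkey q hq))
    -- image is bounded above
    have hbdd : BddAbove ((fun z => infDist z (L : Set (EuclideanSpace ℝ (Fin D)))) ''
        (Ω ∩ closedBall x r)) := by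
      refine ⟨r + dist x p, ?_⟩
      rintro a ⟨z, hz, rfl⟩
      calc infDist z (L : Set (EuclideanSpace ℝ (Fin D))) ≤ dist z p :=
            infDist_le_dist_of_mem hp
        _ ≤ dist z x + dist x p := dist_triangle _ _ _
        _ ≤ r + dist x p := by
            have := mem_closedBall.mp hz.2
            linarith
    calc w ≤ infDist y (L : Set (EuclideanSpace ℝ (Fin D))) := hbound
      _ ≤ sSup ((fun z => infDist z (L : Set (EuclideanSpace ℝ (Fin D)))) ''
            (Ω ∩ closedBall x r)) :=
          le_csSup hbdd (Set.mem_image_of_mem _ hyΩ)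
  have hmain : sInf S = w := by
    apply le_antisymm
    · exact le_trans (csInf_le ⟨w, hlow⟩ hs₁) hs₁le
    · exact le_csInf ⟨_, hs₁⟩ hlow
  exact ⟨hmain, by rw [hmain]; ring⟩
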